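/- arXiv:1411.3877 — 3 statements merged into one kernel-verified Lean document; each statement's English description precedes it below -/
import Mathlib

section
/- For every k ∈ ℤ, every positive integer N and every Dirichlet character χ mod N, the induction map Ind : M_k(Γ₀(N), χ) → M_k(Ind_{Γ₀(N)} χ) is a linear isomorphism; its inverse is given by f ↦ ⟨f, 𝔢_{I₂}⟩. -/
open scoped MatrixGroups Manifold Kronecker ComplexConjugate Classical ComplexOrder
open Matrix UpperHalfPlane Complex Filter MeasureTheory CongruenceSubgroup

noncomputable section

namespace VVMF

abbrev GL2ℤ := Matrix (Fin 2) (Fin 2) ℤ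

/-- The automorphy factor `c τ + d` for `γ ∈ SL(2,ℤ)`. -/
def denomZ (γ : SL(2, ℤ)) (τ : ℍ) : ℂ :=
  ((γ 1 0 : ℤ) : ℂ) * (τ : ℂ) + ((γ 1 1 : ℤ) : ℂ)

/-- `ρ` is a (matrix) representation of `SL(2,ℤ)`. -/
def IsRep {ι : Type*} [Fintype ι] (ρ : SL(2, ℤ) → Matrix ι ι ℂ) : Prop :=
  ρ 1 = 1 ∧ ∀ γ δ : SL(2, ℤ), ρ (γ * δ) = ρ γ * ρ δ

/-- The weight-`k` slash action `f ∣_{k,ρ} γ` on vector-valued functions. -/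
def vslash {ι : Type*} [Fintype ι] (k : ℤ) (ρ : SL(2, ℤ) → Matrix ι ι ℂ)
    (γ : SL(2, ℤ)) (f : ℍ → ι → ℂ) : ℍ → ι → ℂ :=
  fun τ => (denomZ γ τ) ^ (-k) • (ρ γ⁻¹).mulVec (f (γ • τ))

/-- Vector-valued modular form of weight `k` and type `ρ`: holomorphic,
slash-invariant, with all components (equivalently, all functionals) bounded
towards `i∞`. -/
def IsVModForm {ι : Type*} [Fintype ι] (k : ℤ) (ρ : SL(2, ℤ) → Matrix ι ι ℂ)
    (f : ℍ → ι → ℂ) : Prop :=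
  (∀ i, MDifferentiable 𝓘(ℂ) 𝓘(ℂ) (fun τ : ℍ => f τ i)) ∧
  (∀ γ : SL(2, ℤ), vslash k ρ γ f = f) ∧
  (∀ i, IsBoundedAtImInfty (fun τ : ℍ => f τ i))

/-- Vector-valued cusp form. -/
def IsVCuspForm {ι : Type*} [Fintype ι] (k : ℤ) (ρ : SL(2, ℤ) → Matrix ι ι ℂ)
    (f : ℍ → ι → ℂ) : Prop :=
  (∀ i, MDifferentiable 𝓘(ℂ) 𝓘(ℂ) (fun τ : ℍ => f τ i)) ∧
  (∀ γ : SL(2, ℤ), vslash k ρ γ f = f) ∧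
  (∀ i, IsZeroAtImInfty (fun τ : ℍ => f τ i))

/-- The space `M_k(ρ)` of modular forms of weight `k` and type `ρ`. -/
def Mk {ι : Type*} [Fintype ι] (k : ℤ) (ρ : SL(2, ℤ) → Matrix ι ι ℂ) :
    Set (ℍ → ι → ℂ) := {f | IsVModForm k ρ f}

/-- The trivial one-dimensional representation `𝟙` of `SL(2,ℤ)`. -/
def oneRep : SL(2, ℤ) → Matrix Unit Unit ℂ := fun _ => 1

/-- The scalar slash action on ℂ-valued functions. -/
def cslash (k : ℤ) (γ : SL(2, ℤ)) (f : ℍ → ℂ) : ℍ → ℂ :=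
  fun τ => (denomZ γ τ) ^ (-k) * f (γ • τ)

/-- A Dirichlet character mod `N` evaluated on the lower right entry `d(γ)`. -/
def dirSL {N : ℕ} (χ : DirichletCharacter ℂ N) (γ : SL(2, ℤ)) : ℂ :=
  χ (((γ 1 1 : ℤ) : ZMod N))

/-- Classical modular form of weight `k` for `Γ₀(N)` and Dirichlet character `χ`. -/
def IsModFormChi {N : ℕ} (k : ℤ) (χ : DirichletCharacter ℂ N) (f : ℍ → ℂ) : Prop :=
  MDifferentiable 𝓘(ℂ) 𝓘(ℂ) f ∧
  (∀ γ ∈ Gamma0 N, (fun τ => dirSL χ γ⁻¹ * cslash k γ f τ) = f) ∧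
  (∀ γ : SL(2, ℤ), IsBoundedAtImInfty (cslash k γ f))

/-- Classical cusp form of weight `k` for `Γ₀(N)` and Dirichlet character `χ`. -/
def IsCuspFormChi {N : ℕ} (k : ℤ) (χ : DirichletCharacter ℂ N) (f : ℍ → ℂ) : Prop :=
  MDifferentiable 𝓘(ℂ) 𝓘(ℂ) f ∧
  (∀ γ ∈ Gamma0 N, (fun τ => dirSL χ γ⁻¹ * cslash k γ f τ) = f) ∧
  (∀ γ : SL(2, ℤ), IsZeroAtImInfty (cslash k γ f))

/-! ### The sets `Δ_M` and vector-valued Hecke operators -/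

/-- Membership in `Δ_M`: upper triangular, positive diagonal (automatic for `M > 0`),
determinant `M`, and `0 ≤ b < d`. -/
def DeltaPred (M : ℕ) (m : GL2ℤ) : Prop :=
  m 1 0 = 0 ∧ 0 < m 0 0 ∧ m 0 0 * m 1 1 = (M : ℤ) ∧ 0 ≤ m 0 1 ∧ m 0 1 < m 1 1

/-- The set `Δ_M` of upper triangular matrices `(a b; 0 d)`, `a d = M`, `0 ≤ b < d`. -/
def Delta (M : ℕ) : Type := {m : GL2ℤ // DeltaPred M m}

instance (M : ℕ) : Finite (Delta M) := by
  have key : ∀ m : Delta M, m.1 0 0 ≤ (M : ℤ) ∧ m.1 0 1 ≤ (M : ℤ) ∧ m.1 1 1 ≤ (M : ℤ) := by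
    rintro ⟨m, hc, ha, hdet, hb0, hbd⟩
    have hd : 1 ≤ m 1 1 := by nlinarith
    have ha' : 1 ≤ m 0 0 := ha
    refine ⟨?_, ?_, ?_⟩ <;> nlinarith
  refine Finite.of_injective
    (fun m : Delta M => ((⟨(m.1 0 0).toNat, ?_⟩ : Fin (M+1)), (⟨(m.1 0 1).toNat, ?_⟩ : Fin (M+1)),
      (⟨(m.1 1 1).toNat, ?_⟩ : Fin (M+1)))) ?_
  · have := key m; omega
  · have := key m; omega
  · have := key m; omega
  · intro m m' h
    have h1 := congrArg (fun p => (p.1 : Fin (M+1)).val) h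
    have h2 := congrArg (fun p => (p.2.1 : Fin (M+1)).val) h
    have h3 := congrArg (fun p => (p.2.2 : Fin (M+1)).val) h
    simp only at h1 h2 h3
    have e1 : m.1 0 0 = m'.1 0 0 := by
      have p1 := m.2.2.1; have p2 := m'.2.2.1
      omega
    have e2 : m.1 0 1 = m'.1 0 1 := by
      have p1 := m.2.2.2.2.1; have p2 := m'.2.2.2.2.1
      omega
    have e3 : m.1 1 1 = m'.1 1 1 := by
      have p1 := m.2.2.2.2.1; have p2 := m'.2.2.2.2.1
      have q1 := m.2.2.2.2.2; have q2 := m'.2.2.2.2.2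
      omega
    apply Subtype.ext
    ext i j
    fin_cases i <;> fin_cases j
    · exact e1
    · exact e2
    · show m.1 1 0 = m'.1 1 0
      rw [m.2.1, m'.2.1]
    · exact e3

instance (M : ℕ) : Fintype (Delta M) := Fintype.ofFinite _

/-- `HeckeData M bar coc` asserts that for every `m ∈ Δ_M` and `γ ∈ SL(2,ℤ)` we have
`m γ = I_m(γ) · overline{m γ}` with `overline{m γ} = bar m γ ∈ Δ_M` and
`I_m(γ) = coc m γ ∈ SL(2,ℤ)`. -/
def HeckeData (M : ℕ) (bar : Delta M → SL(2, ℤ) → Delta M)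
    (coc : Delta M → SL(2, ℤ) → SL(2, ℤ)) : Prop :=
  ∀ (m : Delta M) (γ : SL(2, ℤ)),
    ((coc m γ : SL(2, ℤ)) : GL2ℤ) * (bar m γ).1 = m.1 * (γ : GL2ℤ)

/-- The representation `T_M ρ` on `V(ρ) ⊗ ℂ[Δ_M]` (coordinates `ι × Δ_M`):
`(T_M ρ)(γ) (v ⊗ 𝔢_m) = ρ(I_m(γ⁻¹)⁻¹) v ⊗ 𝔢_{m·γ⁻¹}`. -/
def heckeRep {ι : Type*} (M : ℕ) (ρ : SL(2, ℤ) → Matrix ι ι ℂ)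
    (bar : Delta M → SL(2, ℤ) → Delta M) (coc : Delta M → SL(2, ℤ) → SL(2, ℤ)) :
    SL(2, ℤ) → Matrix (ι × Delta M) (ι × Delta M) ℂ :=
  fun γ p q => if p.2 = bar q.2 γ⁻¹ then ρ ((coc q.2 γ⁻¹)⁻¹) p.1 q.1 else 0

/-- Möbius action of an upper triangular integer matrix `(a b; 0 d)` (with
`(aτ+b)/d ∈ ℍ`, as is the case for `m ∈ Δ_M`) on `ℍ`. -/
def utAct (m : GL2ℤ) (τ : ℍ) : ℍ :=
  if h : 0 < ((((m 0 0 : ℤ) : ℂ) * (τ : ℂ) + ((m 0 1 : ℤ) : ℂ)) / ((m 1 1 : ℤ) : ℂ)).im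
  then ⟨_, h⟩ else τ

/-- The slash `(f ∣_k m)(τ) = (a/d)^{k/2} f((aτ+b)/d)` for `m = (a b; 0 d)`. -/
def mslash {ι : Type*} (k : ℤ) (m : GL2ℤ) (f : ℍ → ι → ℂ) : ℍ → ι → ℂ :=
  fun τ => (((((m 0 0 : ℤ) : ℝ) / ((m 1 1 : ℤ) : ℝ)) ^ ((k : ℝ) / 2) : ℝ) : ℂ) • f (utAct m τ)

/-- The vector-valued Hecke operator on forms:
`T_M f = ∑_{m ∈ Δ_M} (f ∣_k m) ⊗ 𝔢_m`. -/
def heckeT {ι : Type*} (M : ℕ) (k : ℤ) (f : ℍ → ι → ℂ) : ℍ → (ι × Delta M) → ℂ :=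
  fun τ p => mslash k p.2.1 f τ p.1

/-- Tensor product of vector-valued functions, `(f ⊗ g)(τ) = f(τ) ⊗ g(τ)`. -/
def tensorF {α β : Type*} (f : ℍ → α → ℂ) (g : ℍ → β → ℂ) : ℍ → α × β → ℂ :=
  fun τ p => f τ p.1 * g τ p.2

/-! ### Right cosets and induced representations -/

/-- The set of right cosets `Γ\SL(2,ℤ)`. -/
def Cos (Γ : Subgroup SL(2, ℤ)) : Type := Quotient (QuotientGroup.rightRel Γ)

/-- The coset `Γ γ`. -/
def mkCos (Γ : Subgroup SL(2, ℤ)) (γ : SL(2, ℤ)) : Cos Γ :=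
  Quotient.mk (QuotientGroup.rightRel Γ) γ

/-- Right translation of right cosets: `Γγ ↦ Γγδ`. -/
def cosMul (Γ : Subgroup SL(2, ℤ)) (c : Cos Γ) (δ : SL(2, ℤ)) : Cos Γ :=
  Quotient.map' (· * δ) (by
    intro a b h
    rw [QuotientGroup.rightRel_apply] at h ⊢
    simpa [mul_assoc] using h) c

/-- `IsSection Γ sec` says `sec` picks a representative in each right coset of `Γ`,
with the identity coset represented by `1` (i.e. `1 ∈ B`). -/
def IsSection (Γ : Subgroup SL(2, ℤ)) (sec : Cos Γ → SL(2, ℤ)) : Prop :=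
  (∀ c, mkCos Γ (sec c) = c) ∧ sec (mkCos Γ 1) = 1

/-- The cocycle `I_β(δ) ∈ Γ` of the chosen system of representatives:
`β δ = I_β(δ) · overline{β δ}`, extended to all of `SL(2,ℤ)` by `I_β = I_{overline β}`. -/
def indCoc (Γ : Subgroup SL(2, ℤ)) (sec : Cos Γ → SL(2, ℤ)) (c : Cos Γ)
    (δ : SL(2, ℤ)) : SL(2, ℤ) :=
  sec c * δ * (sec (cosMul Γ c δ))⁻¹

/-- The induced representation `Ind_Γ χ` on `ℂ[Γ\SL(2,ℤ)]`, for a character given as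
a function `χf : SL(2,ℤ) → ℂ` (evaluated only on elements of `Γ`):
`(Ind_Γ χ)(γ) 𝔢_β = χ(I_β(γ⁻¹)⁻¹) 𝔢_{β·γ⁻¹}`. -/
def indRep (Γ : Subgroup SL(2, ℤ)) (sec : Cos Γ → SL(2, ℤ)) (χf : SL(2, ℤ) → ℂ) :
    SL(2, ℤ) → Matrix (Cos Γ) (Cos Γ) ℂ :=
  fun γ c c' => if c = cosMul Γ c' γ⁻¹ then χf ((indCoc Γ sec c' γ⁻¹)⁻¹) else 0

/-- The induced representation `Ind_Γ 𝟙` (a permutation representation). -/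
def permRep (Γ : Subgroup SL(2, ℤ)) : SL(2, ℤ) → Matrix (Cos Γ) (Cos Γ) ℂ :=
  fun γ c c' => if c = cosMul Γ c' γ⁻¹ then 1 else 0

/-- The induction map on modular forms, `Ind f = ∑_γ (f ∣_k γ) 𝔢_γ`. -/
def indForm (Γ : Subgroup SL(2, ℤ)) (sec : Cos Γ → SL(2, ℤ)) (k : ℤ) (f : ℍ → ℂ) :
    ℍ → Cos Γ → ℂ :=
  fun τ c => cslash k (sec c) f τ

/-- The pointwise pairing `⟨f, v⟩ : τ ↦ ⟨f(τ), v⟩` with respect to the scalar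
product making the standard basis orthonormal. -/
def pairF {α : Type*} [Fintype α] (f : ℍ → α → ℂ) (v : α → ℂ) : ℍ → ℂ :=
  fun τ => ∑ a, f τ a * conj (v a)

/-! ### Eisenstein series -/

/-- The matrix `T = (1 1; 0 1)`. -/
def Tmat : SL(2, ℤ) := ⟨!![1, 1; 0, 1], by norm_num [Matrix.det_fin_two_of]⟩

/-- The relation whose classes are the right cosets `Γ_∞(v) γ` of
`Γ_∞(v) = {γ ∈ Γ_∞ : ρ(γ) v = v}`. -/
def eisRel {ι : Type*} [Fintype ι] (ρ : SL(2, ℤ) → Matrix ι ι ℂ) (v : ι → ℂ)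
    (a b : SL(2, ℤ)) : Prop :=
  ((b * a⁻¹ : SL(2, ℤ)) 1 0 : ℤ) = 0 ∧ (ρ (b * a⁻¹)).mulVec v = v

/-- The index `[Γ_∞ : Γ_∞(v)]`. -/
def eisIndex {ι : Type*} [Fintype ι] (ρ : SL(2, ℤ) → Matrix ι ι ℂ) (v : ι → ℂ) : ℕ :=
  Nat.card (Quotient (Relation.EqvGen.setoid
    (fun a b : {g : SL(2, ℤ) // (g 1 0 : ℤ) = 0} => eisRel ρ v a.1 b.1)))

/-- The Eisenstein series
`E_{k,v} = [Γ_∞ : Γ_∞(v)]⁻¹ ∑_{γ ∈ Γ_∞(v)\SL(2,ℤ)} v ∣_{k,ρ} γ` (for `k > 2`). -/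
def eisSeries {ι : Type*} [Fintype ι] (k : ℤ) (ρ : SL(2, ℤ) → Matrix ι ι ℂ)
    (v : ι → ℂ) : ℍ → ι → ℂ :=
  fun τ => ((eisIndex ρ v : ℂ))⁻¹ •
    ∑' c : Quotient (Relation.EqvGen.setoid (eisRel ρ v)),
      vslash k ρ (Quotient.out c) (fun _ => v) τ

/-- The Eisenstein series defined via the Hecke trick,
`E_{k,v} = [Γ_∞ : Γ_∞(v)]⁻¹ lim_{s→0} ∑_{γ ∈ Γ_∞(v)\SL(2,ℤ)} y^s v ∣_{k,ρ} γ`. -/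
def eisSeriesH {ι : Type*} [Fintype ι] (k : ℤ) (ρ : SL(2, ℤ) → Matrix ι ι ℂ)
    (v : ι → ℂ) : ℍ → ι → ℂ :=
  fun τ => limUnder (nhdsWithin (0 : ℝ) (Set.Ioi 0)) (fun s : ℝ =>
    ((eisIndex ρ v : ℂ))⁻¹ •
      ∑' c : Quotient (Relation.EqvGen.setoid (eisRel ρ v)),
        ((((Quotient.out c • τ : ℍ).im) ^ s : ℝ) : ℂ) •
          vslash k ρ (Quotient.out c) (fun _ => v) τ)

/-- The Eisenstein space `E_k(ρ) = span{E_{k,v} : v ∈ V(ρ)}` (for `k > 2`). -/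
def Ek {ι : Type*} [Fintype ι] (k : ℤ) (ρ : SL(2, ℤ) → Matrix ι ι ℂ) :
    Submodule ℂ (ℍ → ι → ℂ) :=
  Submodule.span ℂ {f | ∃ v : ι → ℂ, f = eisSeries k ρ v}

/-- The submodule of `SL(2,ℤ)`-invariant vectors (the isotrivial component `ρ(𝟙)`). -/
def invariants {ι : Type*} [Fintype ι] (ρ : SL(2, ℤ) → Matrix ι ι ℂ) :
    Submodule ℂ (ι → ℂ) where
  carrier := {v | ∀ γ, (ρ γ).mulVec v = v}
  add_mem' := by
    intro a b ha hb γ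
    rw [Matrix.mulVec_add, ha, hb]
  zero_mem' := by
    intro γ
    simp [Matrix.mulVec_zero]
  smul_mem' := by
    intro c a ha γ
    rw [Matrix.mulVec_smul, ha]

/-- The subspace `V(ρ)(1)_T = {v : ρ(T) v = v}` of `T`-fixed vectors. -/
def fixedT {ι : Type*} [Fintype ι] (ρ : SL(2, ℤ) → Matrix ι ι ℂ) :
    Submodule ℂ (ι → ℂ) where
  carrier := {v | (ρ Tmat).mulVec v = v}
  add_mem' := by
    intro a b ha hb
    show (ρ Tmat).mulVec _ = _
    rw [Matrix.mulVec_add, ha, hb]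
  zero_mem' := by
    show (ρ Tmat).mulVec _ = _
    simp [Matrix.mulVec_zero]
  smul_mem' := by
    intro c a ha
    show (ρ Tmat).mulVec _ = _
    rw [Matrix.mulVec_smul, ha]

/-! ### The hyperbolic measure and Petersson scalar products -/

instance : MeasurableSpace ℍ := borel ℍ

/-- The measure `dx dy` on `ℍ` (hyperbolic weights are carried by the integrands). -/
def μH : Measure ℍ := (MeasureTheory.volume : Measure ℂ).comap (fun τ : ℍ => (τ : ℂ))

/-- The standard (closed) fundamental domain of `SL(2,ℤ)\ℍ`. -/
def fdSL : Set ℍ := ModularGroup.fd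

/-- The Petersson scalar product `⟨f, g⟩_ι` of vector-valued forms `f` of type `ρ` and
`g` of type `σ`, with respect to the embedding `ι : 𝟙 ↪ ρ ⊗ σ̄` with `ι(1) = u`:
`∫_{SL(2,ℤ)\ℍ} ⟨(f ⊗ ḡ)(τ), ι(1)⟩ y^{k-2} dx dy`. -/
def petersson {α β : Type*} [Fintype α] [Fintype β] (k : ℤ) (u : α × β → ℂ)
    (f : ℍ → α → ℂ) (g : ℍ → β → ℂ) : ℂ :=
  ∫ τ in fdSL, (∑ a, ∑ b, f τ a * conj (g τ b) * conj (u (a, b))) *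
    ((τ.im : ℂ)) ^ (k - 2) ∂μH

/-- The regularized Petersson scalar product (regularized as the limit of integrals
over truncations of the fundamental domain). -/
def peterssonReg {α β : Type*} [Fintype α] [Fintype β] (k : ℤ) (u : α × β → ℂ)
    (f : ℍ → α → ℂ) (g : ℍ → β → ℂ) : ℂ :=
  limUnder Filter.atTop (fun t : ℝ =>
    ∫ τ in {τ ∈ fdSL | τ.im ≤ t}, (∑ a, ∑ b, f τ a * conj (g τ b) * conj (u (a, b))) *
      ((τ.im : ℂ)) ^ (k - 2) ∂μH)

/-- The canonical `ι(1) = ∑_w w ⊗ w̄` for forms of the same type. -/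
def diagPair (α : Type*) : α × α → ℂ := fun p => if p.1 = p.2 then 1 else 0

/-- A fundamental domain for `Γ\ℍ` obtained from coset representatives. -/
def fdGamma (Γ : Subgroup SL(2, ℤ)) (sec : Cos Γ → SL(2, ℤ)) : Set ℍ :=
  ⋃ c : Cos Γ, (fun τ => sec c • τ) '' fdSL

/-- The normalized Petersson scalar product of two classical modular forms for `Γ`:
`[SL(2,ℤ):Γ]⁻¹ ∫_{Γ\ℍ} f(τ) conj(g(τ)) y^{k-2} dx dy`. -/
def peterssonGamma (k : ℤ) (Γ : Subgroup SL(2, ℤ)) (sec : Cos Γ → SL(2, ℤ))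
    (f g : ℍ → ℂ) : ℂ :=
  ((Γ.index : ℂ))⁻¹ *
    ∫ τ in fdGamma Γ sec, f τ * conj (g τ) * ((τ.im : ℂ)) ^ (k - 2) ∂μH

/-! ### Kernels, finite index, instances -/

/-- The kernel of a representation. -/
def repKer {ι : Type*} [Fintype ι] (ρ : SL(2, ℤ) → Matrix ι ι ℂ) (hρ : IsRep ρ) :
    Subgroup SL(2, ℤ) where
  carrier := {γ | ρ γ = 1}
  one_mem' := hρ.1
  mul_mem' := by
    intro a b ha hb
    show ρ (_ * _) = 1
    rw [hρ.2, ha, hb, one_mul]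
  inv_mem' := by
    intro a ha
    show ρ _⁻¹ = 1
    have h2 := hρ.2 a⁻¹ a
    rw [inv_mul_cancel, hρ.1, ha, mul_one] at h2
    exact h2.symm

instance (Γ : Subgroup SL(2, ℤ)) [Γ.FiniteIndex] : Finite (Cos Γ) :=
  Finite.of_equiv _ (QuotientGroup.quotientRightRelEquivQuotientLeftRel Γ).symm

instance (Γ : Subgroup SL(2, ℤ)) [Γ.FiniteIndex] : Fintype (Cos Γ) := Fintype.ofFinite _

instance (N : ℕ) [NeZero N] : (CongruenceSubgroup.Gamma N).FiniteIndex := by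
  haveI : Finite (Matrix.SpecialLinearGroup (Fin 2) (ZMod N)) := Subtype.finite
  have : (CongruenceSubgroup.Gamma N) = (Matrix.SpecialLinearGroup.map (Int.castRingHom (ZMod N))).ker := rfl
  rw [this]
  infer_instance

instance (N : ℕ) [NeZero N] : (Gamma0 N).FiniteIndex := by
  refine Subgroup.finiteIndex_of_le (H := CongruenceSubgroup.Gamma N) ?_
  intro γ hγ
  rw [Gamma_mem] at hγ
  rw [Gamma0_mem]
  exact hγ.2.2.1

instance (N : ℕ) [NeZero N] : (Gamma1 N).FiniteIndex := by
  refine Subgroup.finiteIndex_of_le (H := CongruenceSubgroup.Gamma N) ?_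
  intro γ hγ
  rw [Gamma_mem] at hγ
  rw [Gamma1_mem]
  exact ⟨hγ.1, hγ.2.2.2, hγ.2.2.1⟩

/-- A sesquilinear scalar product on `ι → ℂ` with Gram matrix `B`:
`⟨v, w⟩_B = ∑_{i,j} conj(w i) B i j v j`. -/
def sesq {ι : Type*} [Fintype ι] (B : Matrix ι ι ℂ) (v w : ι → ℂ) : ℂ :=
  ∑ i, ∑ j, conj (w i) * B i j * v j

/-- The scalar product `⟨v ⊗ 𝔢_m, w ⊗ 𝔢_{m'}⟩ = δ_{m,m'} ⟨v,w⟩_B` on `V(ρ) ⊗ ℂ[Δ_M]`. -/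
def blockDiagGram {ι : Type*} (M : ℕ) (B : Matrix ι ι ℂ) :
    Matrix (ι × Delta M) (ι × Delta M) ℂ :=
  Matrix.of fun p q => if p.2 = q.2 then B p.1 q.1 else 0

/-- The inclusion `𝟙 → T_M 𝟙`, `c ↦ c ∑_{m ∈ Δ_M} 𝔢_m`. -/
def oneIncl (M : ℕ) : Matrix (Unit × Delta M) Unit ℂ :=
  Matrix.of fun _ _ => 1

/-- `T_M φ` for a homomorphism (intertwining matrix) `φ : ρ → σ`:
`v ⊗ 𝔢_m ↦ φ(v) ⊗ 𝔢_m`. -/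
def heckeHom {ι κ : Type*} (M : ℕ) (φ : Matrix κ ι ℂ) :
    Matrix (κ × Delta M) (ι × Delta M) ℂ :=
  fun p q => if p.2 = q.2 then φ p.1 q.1 else 0

/-- The surjection `(T_M ρ) ⊗ (T_M σ) → T_M (ρ ⊗ σ)`:
`(v ⊗ 𝔢_m) ⊗ (w ⊗ 𝔢_{m'}) ↦ δ_{m,m'} (v ⊗ w) ⊗ 𝔢_m`. -/
def heckeTenProj (ι κ : Type*) (M : ℕ) :
    Matrix ((ι × κ) × Delta M) ((ι × Delta M) × (κ × Delta M)) ℂ :=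
  fun p q => if p.1.1 = q.1.1 ∧ p.1.2 = q.2.1 ∧ p.2 = q.1.2 ∧ q.1.2 = q.2.2 then 1 else 0

/-! ### Classical operators, special matrices, and intertwining inclusions -/

set_option linter.unnecessarySeqFocus false

/-- The scalar slash `(f ∣_k m)(τ) = (a/d)^{k/2} f((aτ+b)/d)` for `m = (a b; 0 d)`. -/
def cmslash (k : ℤ) (m : GL2ℤ) (f : ℍ → ℂ) : ℍ → ℂ :=
  fun τ => (((((m 0 0 : ℤ) : ℝ) / ((m 1 1 : ℤ) : ℝ)) ^ ((k : ℝ) / 2) : ℝ) : ℂ) *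
    f (utAct m τ)

/-- `𝔢_γ`, the standard basis vector of `ℂ[Γ\SL(2,ℤ)]` at the coset `Γγ`. -/
def eCos (Γ : Subgroup SL(2, ℤ)) (γ : SL(2, ℤ)) : Cos Γ → ℂ :=
  fun c => if c = mkCos Γ γ then 1 else 0

/-- The matrix `m_M = diag(M, 1) ∈ Δ_M`. -/
def mMat (M : ℕ) (hM : 0 < M) : Delta M :=
  ⟨!![(M : ℤ), 0; 0, 1], by
    refine ⟨?_, ?_, ?_, ?_, ?_⟩ <;> simp <;> omega⟩

/-- The matrix `m'_M = diag(1, M) ∈ Δ_M`. -/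
def mMat' (M : ℕ) (hM : 0 < M) : Delta M :=
  ⟨!![1, 0; 0, (M : ℤ)], by
    refine ⟨?_, ?_, ?_, ?_, ?_⟩ <;> simp <;> omega⟩

/-- The matrix `m_{M,b} = (M b; 0 M) ∈ Δ_{M²}` for `0 ≤ b < M`. -/
def mMatB (M : ℕ) (b : Fin M) : Delta (M * M) :=
  ⟨!![(M : ℤ), (b : ℤ); 0, (M : ℤ)], by
    have hb := b.2
    refine ⟨?_, ?_, ?_, ?_, ?_⟩ <;> simp <;> omega⟩

/-- The matrix `diag(M, M) ∈ Δ_{M²}`. -/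
def mMatMM (M : ℕ) (hM : 0 < M) : Delta (M * M) :=
  ⟨!![(M : ℤ), 0; 0, (M : ℤ)], by
    refine ⟨?_, ?_, ?_, ?_, ?_⟩ <;> simp <;> omega⟩

/-- Rescaling `({\rm sc}_M f)(τ) = f(M τ)`. -/
def scMul (M : ℕ) (f : ℍ → ℂ) : ℍ → ℂ := fun τ => f (utAct !![(M : ℤ), 0; 0, 1] τ)

/-- Rescaling `({\rm sc}_{1/M} f)(τ) = f(τ / M)`. -/
def scDiv (M : ℕ) (f : ℍ → ℂ) : ℍ → ℂ := fun τ => f (utAct !![1, 0; 0, (M : ℤ)] τ)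

/-- The classical Hecke operator
`(f ∣_{k,χ} T_M)(τ) = M^{k-1} ∑_{d ∣ M, 0 ≤ b < d} d^{-k} conj(χ(d)) f((M d⁻¹ τ + b)/d)`. -/
def classicalHecke {N : ℕ} (M : ℕ) (k : ℤ) (χ : DirichletCharacter ℂ N)
    (f : ℍ → ℂ) : ℍ → ℂ :=
  fun τ => (M : ℂ) ^ (k - 1) *
    ∑ d ∈ M.divisors, ∑ b ∈ Finset.range d,
      ((d : ℂ)) ^ (-k) * conj (χ ((d : ℕ) : ZMod N)) *
        f (utAct !![((M / d : ℕ) : ℤ), (b : ℤ); 0, ((d : ℕ) : ℤ)] τ)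

/-- `e_M(x) = exp(2πi x/M)`. -/
def eM (M : ℕ) (x : ℤ) : ℂ := Complex.exp (2 * Real.pi * Complex.I * x / M)

/-- The Gauss sum `G(ε, e_M(b)) = ∑_{a mod M} ε(a) e_M(a b)`. -/
def gaussSumE {M : ℕ} (ε : DirichletCharacter ℂ M) (b : ℤ) : ℂ :=
  ∑ a ∈ Finset.range M, ε ((a : ℕ) : ZMod M) * eM M ((a : ℤ) * b)

/-- The value `χ(I_{I₂}(δ))` of a Dirichlet character mod `N` on the cocycle
`I_{I₂}(δ) ∈ Γ₀(N)`. -/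
def cocVal {N : ℕ} (χ : DirichletCharacter ℂ N) (sec : Cos (Gamma0 N) → SL(2, ℤ))
    (δ : SL(2, ℤ)) : ℂ :=
  dirSL χ (indCoc (Gamma0 N) sec (mkCos (Gamma0 N) 1) δ)

/-- The inclusion `ι_Hecke : ρ_χ → T_M ρ_χ`,
`𝔢_γ ↦ M^{k/2-1} ∑_{m ∈ Δ_M} χ(m) conj(χ(I_{I₂}(I_m(γ)))) 𝔢_{I_m(γ)} ⊗ 𝔢_{m·γ}`. -/
def iotaHecke {N : ℕ} (M : ℕ) (k : ℤ) (χ : DirichletCharacter ℂ N)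
    (sec : Cos (Gamma0 N) → SL(2, ℤ))
    (bar : Delta M → SL(2, ℤ) → Delta M) (coc : Delta M → SL(2, ℤ) → SL(2, ℤ)) :
    Matrix (Cos (Gamma0 N) × Delta M) (Cos (Gamma0 N)) ℂ :=
  Matrix.of fun p c =>
    ((((M : ℝ) ^ ((k : ℝ) / 2 - 1) : ℝ)) : ℂ) *
      ∑ m : Delta M,
        if p.2 = bar m (sec c) ∧ p.1 = mkCos (Gamma0 N) (coc m (sec c)) then
          χ ((m.1 1 1 : ℤ) : ZMod N) * conj (cocVal χ sec (coc m (sec c)))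
        else 0

/-- The inclusion `ι_AL : ρ_{χ'} → T_M ρ_χ`,
`𝔢_γ ↦ conj(χ(I_{I₂}(γ_{M,N} I_{m_M}(γ)))) 𝔢_{γ_{M,N} I_{m_M}(γ)} ⊗ 𝔢_{m_M·γ}`. -/
def iotaAL {N : ℕ} (M : ℕ) (hM : 0 < M) (χ : DirichletCharacter ℂ N)
    (sec : Cos (Gamma0 N) → SL(2, ℤ)) (γMN : SL(2, ℤ))
    (bar : Delta M → SL(2, ℤ) → Delta M) (coc : Delta M → SL(2, ℤ) → SL(2, ℤ)) :
    Matrix (Cos (Gamma0 N) × Delta M) (Cos (Gamma0 N)) ℂ :=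
  Matrix.of fun p c =>
    if p.2 = bar (mMat M hM) (sec c) ∧
        p.1 = mkCos (Gamma0 N) (γMN * coc (mMat M hM) (sec c)) then
      conj (cocVal χ sec (γMN * coc (mMat M hM) (sec c)))
    else 0

/-- The inclusion `ι_old : ρ_{χ_M} → T_M ρ_χ`,
`𝔢_γ ↦ M^{-k/2} conj(χ(I_{I₂}(I_{m_M}(γ)))) 𝔢_{I_{m_M}(γ)} ⊗ 𝔢_{m_M·γ}`. -/
def iotaOld {N : ℕ} (M : ℕ) (hM : 0 < M) (k : ℤ) (χ : DirichletCharacter ℂ N)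
    (sec : Cos (Gamma0 N) → SL(2, ℤ)) (secMN : Cos (Gamma0 (M * N)) → SL(2, ℤ))
    (bar : Delta M → SL(2, ℤ) → Delta M) (coc : Delta M → SL(2, ℤ) → SL(2, ℤ)) :
    Matrix (Cos (Gamma0 N) × Delta M) (Cos (Gamma0 (M * N))) ℂ :=
  Matrix.of fun p c =>
    if p.2 = bar (mMat M hM) (secMN c) ∧
        p.1 = mkCos (Gamma0 N) (coc (mMat M hM) (secMN c)) then
      ((((M : ℝ) ^ (-((k : ℝ) / 2)) : ℝ)) : ℂ) *
        conj (cocVal χ sec (coc (mMat M hM) (secMN c)))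
    else 0

/-- The subgroup `Γ₁(N², N) = {γ : c(γ) ≡ 0 mod N², a(γ) ≡ d(γ) ≡ 1 mod N}`. -/
def Gamma1Sq (N : ℕ) : Subgroup SL(2, ℤ) := Gamma0 (N * N) ⊓ Gamma1 N

instance (N : ℕ) [NeZero N] : (Gamma1Sq N).FiniteIndex := by
  unfold Gamma1Sq
  infer_instance

/-- The inclusion `ι_{Γ(N)} : ρ_{Γ(N)} → T_N ρ_{Γ₁(N²,N)}`,
`𝔢_γ ↦ N^{k/2} 𝔢_{I_{m'_N}(γ)} ⊗ 𝔢_{m'_N·γ}`. -/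
def iotaGammaN (N : ℕ) (hN : 0 < N) (k : ℤ)
    (secG : Cos (CongruenceSubgroup.Gamma N) → SL(2, ℤ))
    (bar : Delta N → SL(2, ℤ) → Delta N) (coc : Delta N → SL(2, ℤ) → SL(2, ℤ)) :
    Matrix (Cos (Gamma1Sq N) × Delta N) (Cos (CongruenceSubgroup.Gamma N)) ℂ :=
  Matrix.of fun p c =>
    if p.2 = bar (mMat' N hN) (secG c) ∧
        p.1 = mkCos (Gamma1Sq N) (coc (mMat' N hN) (secG c)) then
      ((((N : ℝ) ^ ((k : ℝ) / 2) : ℝ)) : ℂ)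
    else 0

/-- The inclusion `ι_twist : ρ_{χ'} → T_{M²} ρ_χ`,
`𝔢_γ ↦ M⁻¹ ∑_{b mod M} G(ε, e_M(-b)) conj(χ(I_{I₂}(I_{m_{M,b}}(γ))))
𝔢_{I_{m_{M,b}}(γ)} ⊗ 𝔢_{m_{M,b}·γ}`. -/
def iotaTwist {N : ℕ} (M : ℕ) (χ : DirichletCharacter ℂ N)
    (ε : DirichletCharacter ℂ M)
    (sec : Cos (Gamma0 N) → SL(2, ℤ)) (sec' : Cos (Gamma0 (N * (M * M))) → SL(2, ℤ))
    (bar : Delta (M * M) → SL(2, ℤ) → Delta (M * M))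
    (coc : Delta (M * M) → SL(2, ℤ) → SL(2, ℤ)) :
    Matrix (Cos (Gamma0 N) × Delta (M * M)) (Cos (Gamma0 (N * (M * M)))) ℂ :=
  Matrix.of fun p c =>
    ((M : ℂ))⁻¹ *
      ∑ b : Fin M,
        if p.2 = bar (mMatB M b) (sec' c) ∧
            p.1 = mkCos (Gamma0 N) (coc (mMatB M b) (sec' c)) then
          gaussSumE ε (-(b : ℤ)) * conj (cocVal χ sec (coc (mMatB M b) (sec' c)))
        else 0

/-- The inclusion `ι_id : ρ_χ → T_{M²} ρ_χ`, `𝔢_γ ↦ 𝔢_γ ⊗ 𝔢_{diag(M,M)}`. -/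
def iotaId {N : ℕ} (M : ℕ) (hM : 0 < M) :
    Matrix (Cos (Gamma0 N) × Delta (M * M)) (Cos (Gamma0 N)) ℂ :=
  Matrix.of fun p c => if p.1 = c ∧ p.2 = mMatMM M hM then 1 else 0

end VVMF

open VVMF

namespace VVMF
set_option synthInstance.maxHeartbeats 1000000
set_option maxHeartbeats 1000000

lemma denomZ_eq (γ : SL(2,ℤ)) (τ : ℍ) : denomZ γ τ = UpperHalfPlane.denom (γ : GL(2,ℝ)⁺) τ :=
  (ModularGroup.denom_apply γ τ).symm

lemma denomZ_ne_zero (γ : SL(2,ℤ)) (τ : ℍ) : denomZ γ τ ≠ 0 := by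
  rw [denomZ_eq]; exact UpperHalfPlane.denom_ne_zero _ _

lemma denomZ_one (τ : ℍ) : denomZ 1 τ = 1 := by
  simp [denomZ]

set_option synthInstance.maxHeartbeats 400000 in
lemma denomZ_cocycle (α β : SL(2,ℤ)) (τ : ℍ) :
    denomZ (α * β) τ = denomZ α (β • τ) * denomZ β τ := by
  have hD : ((β 1 0 : ℤ) : ℂ) * (τ : ℂ) + ((β 1 1 : ℤ) : ℂ) ≠ 0 := denomZ_ne_zero β τ
  have h : ((β • τ : ℍ) : ℂ) = (((β 0 0 : ℤ):ℂ) * τ + ((β 0 1 : ℤ):ℂ)) / denomZ β τ := by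
    rw [ModularGroup.sl_moeb, UpperHalfPlane.coe_smul_of_det_pos (by simp), denomZ_eq]
    simp [UpperHalfPlane.num, UpperHalfPlane.denom]
  simp only [denomZ] at h ⊢
  rw [h]
  simp only [Matrix.SpecialLinearGroup.coe_mul, Matrix.mul_apply, Fin.sum_univ_two]
  push_cast
  field_simp
  ring

set_option synthInstance.maxHeartbeats 400000 in
lemma coe_smul_eq (γ : SL(2,ℤ)) (τ : ℍ) :
    ((γ • τ : ℍ) : ℂ) = (((γ 0 0 : ℤ):ℂ) * τ + ((γ 0 1 : ℤ):ℂ)) / denomZ γ τ := by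
  rw [ModularGroup.sl_moeb, UpperHalfPlane.coe_smul_of_det_pos (by simp), denomZ_eq]
  simp [UpperHalfPlane.num, UpperHalfPlane.denom]

lemma cslash_one (k : ℤ) (f : ℍ → ℂ) : cslash k 1 f = f := by
  funext τ; simp [cslash, denomZ_one]

lemma cslash_mul (k : ℤ) (α β : SL(2,ℤ)) (f : ℍ → ℂ) :
    cslash k (α * β) f = cslash k β (cslash k α f) := by
  funext τ
  simp only [cslash, mul_smul, denomZ_cocycle, mul_zpow]
  ring

lemma mdifferentiable_cslash (k : ℤ) (γ : SL(2,ℤ)) {f : ℍ → ℂ}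
    (hf : MDifferentiable 𝓘(ℂ) 𝓘(ℂ) f) :
    MDifferentiable 𝓘(ℂ) 𝓘(ℂ) (cslash k γ f) := by
  rw [UpperHalfPlane.mdifferentiable_iff] at hf ⊢
  have hopen : IsOpen {z : ℂ | 0 < z.im} := Complex.continuous_im.isOpen_preimage _ isOpen_Ioi
  have hden : ∀ z : ℂ, 0 < z.im →
      ((γ 1 0 : ℤ):ℂ) * z + ((γ 1 1 : ℤ):ℂ) ≠ 0 := fun z hz => denomZ_ne_zero γ ⟨z, hz⟩
  have him : ∀ (z : ℂ), 0 < z.im →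
      0 < ((((γ 0 0 : ℤ):ℂ) * z + ((γ 0 1 : ℤ):ℂ)) /
        (((γ 1 0 : ℤ):ℂ) * z + ((γ 1 1 : ℤ):ℂ))).im := by
    intro z hz
    set w : ℍ := ⟨z, hz⟩ with hw
    have h1 : 0 < ((γ • w : ℍ) : ℂ).im := (γ • w).2
    rw [coe_smul_eq] at h1
    exact h1
  refine DifferentiableOn.congr (f := fun z =>
      (((γ 1 0 : ℤ):ℂ) * z + ((γ 1 1 : ℤ):ℂ)) ^ (-k) *
        (f ∘ UpperHalfPlane.ofComplex) ((((γ 0 0 : ℤ):ℂ) * z + ((γ 0 1 : ℤ):ℂ)) /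
          (((γ 1 0 : ℤ):ℂ) * z + ((γ 1 1 : ℤ):ℂ)))) ?_ ?_
  · intro z hz
    have h1 : DifferentiableAt ℂ
        (fun z : ℂ => (((γ 1 0 : ℤ):ℂ) * z + ((γ 1 1 : ℤ):ℂ)) ^ (-k)) z := by
      apply DifferentiableAt.zpow
      · exact (differentiableAt_id.const_mul _).add_const _
      · exact Or.inl (hden z hz)
    have h2 : DifferentiableAt ℂ (fun z : ℂ => (((γ 0 0 : ℤ):ℂ) * z + ((γ 0 1 : ℤ):ℂ)) /
        (((γ 1 0 : ℤ):ℂ) * z + ((γ 1 1 : ℤ):ℂ))) z :=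
      ((differentiableAt_id.const_mul _).add_const _).div
        ((differentiableAt_id.const_mul _).add_const _) (hden z hz)
    have h3 : DifferentiableAt ℂ (f ∘ UpperHalfPlane.ofComplex)
        ((((γ 0 0 : ℤ):ℂ) * z + ((γ 0 1 : ℤ):ℂ)) /
          (((γ 1 0 : ℤ):ℂ) * z + ((γ 1 1 : ℤ):ℂ))) :=
      (hf _ (him z hz)).differentiableAt (hopen.mem_nhds (him z hz))
    exact (h1.mul (h3.comp z h2)).differentiableWithinAt
  · intro z hz
    have hz' : 0 < z.im := hz
    set w : ℍ := ⟨z, hz'⟩ with hw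
    simp only [Function.comp_apply, UpperHalfPlane.ofComplex_apply_of_im_pos hz']
    show cslash k γ f w = _
    have e2 : f (γ • w) = (f ∘ UpperHalfPlane.ofComplex)
        ((((γ 0 0 : ℤ):ℂ) * ↑w + ((γ 0 1 : ℤ):ℂ)) / denomZ γ w) := by
      rw [Function.comp_apply, ← coe_smul_eq, UpperHalfPlane.ofComplex_apply]
    rw [cslash, e2]
    rfl

end VVMF

namespace VVMF
set_option synthInstance.maxHeartbeats 1000000
set_option maxHeartbeats 1000000

variable {Γ : Subgroup SL(2,ℤ)}

lemma cosMul_mk (γ δ : SL(2,ℤ)) : cosMul Γ (mkCos Γ γ) δ = mkCos Γ (γ * δ) := rfl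

lemma mkCos_eq_iff {γ δ : SL(2,ℤ)} : mkCos Γ γ = mkCos Γ δ ↔ δ * γ⁻¹ ∈ Γ := by
  show @Eq (Quotient (QuotientGroup.rightRel Γ)) (Quotient.mk _ γ) (Quotient.mk _ δ) ↔ _
  rw [Quotient.eq]
  exact QuotientGroup.rightRel_apply

lemma cosMul_cosMul (c : Cos Γ) (δ δ' : SL(2,ℤ)) :
    cosMul Γ (cosMul Γ c δ) δ' = cosMul Γ c (δ * δ') := by
  induction c using Quotient.ind
  show mkCos Γ _ = mkCos Γ _
  simp only []
  rw [mul_assoc]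

lemma cosMul_one (c : Cos Γ) : cosMul Γ c 1 = c := by
  induction c using Quotient.ind
  show mkCos Γ _ = mkCos Γ _
  simp only []
  rw [mul_one]

lemma cos_eq_comm (c c' : Cos Γ) (γ : SL(2,ℤ)) :
    c = cosMul Γ c' γ ↔ cosMul Γ c γ⁻¹ = c' := by
  constructor
  · rintro rfl
    rw [cosMul_cosMul, mul_inv_cancel, cosMul_one]
  · rintro rfl
    rw [cosMul_cosMul, inv_mul_cancel, cosMul_one]

lemma indCoc_mem {sec : Cos Γ → SL(2,ℤ)} (hsec : IsSection Γ sec) (c : Cos Γ)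
    (δ : SL(2,ℤ)) : indCoc Γ sec c δ ∈ Γ := by
  have h1 : mkCos Γ (sec (cosMul Γ c δ)) = mkCos Γ (sec c * δ) := by
    rw [hsec.1, ← cosMul_mk, hsec.1]
  rw [mkCos_eq_iff] at h1
  exact h1

lemma vslash_indRep_apply [Fintype (Cos Γ)] (sec : Cos Γ → SL(2,ℤ)) (χf : SL(2,ℤ) → ℂ)
    (k : ℤ) (γ : SL(2,ℤ)) (G : ℍ → Cos Γ → ℂ) (τ : ℍ) (c : Cos Γ) :
    vslash k (indRep Γ sec χf) γ G τ c
      = denomZ γ τ ^ (-k) *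
        (χf ((indCoc Γ sec (cosMul Γ c γ⁻¹) γ)⁻¹) * G (γ • τ) (cosMul Γ c γ⁻¹)) := by
  simp only [vslash, Pi.smul_apply, smul_eq_mul, indRep, Matrix.mulVec, dotProduct,
    inv_inv]
  congr 1
  rw [Finset.sum_eq_single (cosMul Γ c γ⁻¹)]
  · rw [if_pos ((cos_eq_comm c _ γ).mpr rfl)]
  · intro b _ hb
    rw [if_neg, zero_mul]
    intro hcon
    exact hb ((cos_eq_comm c b γ).mp hcon).symm
  · intro h
    exact absurd (Finset.mem_univ _) h

lemma dirSL_one {N : ℕ} (χ : DirichletCharacter ℂ N) : dirSL χ 1 = 1 := by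
  have h : ((1 : SL(2,ℤ)) 1 1 : ℤ) = 1 := by
    simp [Matrix.SpecialLinearGroup.coe_one, Matrix.one_apply]
  rw [dirSL, h]
  simp

lemma dirSL_inv_mul {N : ℕ} (χ : DirichletCharacter ℂ N) {g : SL(2,ℤ)}
    (hg : g ∈ Gamma0 N) : dirSL χ g⁻¹ * dirSL χ g = 1 := by
  have h10 : ((g 1 0 : ℤ) : ZMod N) = 0 := by rwa [CongruenceSubgroup.Gamma0_mem] at hg
  have hinv : ((g⁻¹ : SL(2,ℤ)) 1 1 : ℤ) = g 0 0 := by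
    rw [Matrix.SpecialLinearGroup.SL2_inv_expl]
    rfl
  rw [dirSL, dirSL, hinv, ← _root_.map_mul]
  have hdet : (g 0 0 : ℤ) * g 1 1 = 1 + g 0 1 * g 1 0 := by
    have hd := g.2
    rw [Matrix.det_fin_two] at hd
    linarith
  have hz : ((g 0 0 : ℤ) : ZMod N) * ((g 1 1 : ℤ) : ZMod N) = 1 := by
    have := congrArg (fun x : ℤ => (x : ZMod N)) hdet
    push_cast at this
    rw [h10, mul_zero, add_zero] at this
    exact this
  rw [hz, _root_.map_one]

lemma pairF_eCos [Fintype (Cos Γ)] (F : ℍ → Cos Γ → ℂ) :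
    pairF F (eCos Γ 1) = fun τ => F τ (mkCos Γ 1) := by
  funext τ
  simp [pairF, eCos, apply_ite conj, mul_ite]

end VVMF

set_option synthInstance.maxHeartbeats 1000000
set_option maxHeartbeats 1000000

/-- For every `k`, `N` and Dirichlet character `χ` mod `N`, the
induction map `Ind : M_k(Γ₀(N), χ) → M_k(Ind_{Γ₀(N)} χ)` is a linear isomorphism, with
inverse `f ↦ ⟨f, 𝔢_{I₂}⟩`. -/
theorem induction_is_isomorphism {N : ℕ} [NeZero N] (k : ℤ)
    (χ : DirichletCharacter ℂ N)
    (sec : Cos (Gamma0 N) → SL(2, ℤ)) (hsec : IsSection (Gamma0 N) sec) :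
    -- `Ind` maps `M_k(Γ₀(N), χ)` into `M_k(Ind_{Γ₀(N)} χ)`
    (∀ f : ℍ → ℂ, IsModFormChi k χ f →
      IsVModForm k (indRep (Gamma0 N) sec (dirSL χ)) (indForm (Gamma0 N) sec k f)) ∧
    -- `Ind` is linear
    (∀ (a : ℂ) (f g : ℍ → ℂ),
      indForm (Gamma0 N) sec k (fun τ => a * f τ + g τ) =
        fun τ c => a * indForm (Gamma0 N) sec k f τ c + indForm (Gamma0 N) sec k g τ c) ∧
    -- `f ↦ ⟨f, 𝔢_{I₂}⟩` maps `M_k(Ind_{Γ₀(N)} χ)` into `M_k(Γ₀(N), χ)`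
    (∀ F : ℍ → Cos (Gamma0 N) → ℂ, IsVModForm k (indRep (Gamma0 N) sec (dirSL χ)) F →
      IsModFormChi k χ (pairF F (eCos (Gamma0 N) 1))) ∧
    -- `f ↦ ⟨f, 𝔢_{I₂}⟩` is a two-sided inverse of `Ind`
    (∀ f : ℍ → ℂ, IsModFormChi k χ f →
      pairF (indForm (Gamma0 N) sec k f) (eCos (Gamma0 N) 1) = f) ∧
    (∀ F : ℍ → Cos (Gamma0 N) → ℂ, IsVModForm k (indRep (Gamma0 N) sec (dirSL χ)) F →
      indForm (Gamma0 N) sec k (pairF F (eCos (Gamma0 N) 1)) = F) := by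
  refine ⟨?_, ?_, ?_, ?_, ?_⟩
  · -- Part 1
    rintro f ⟨hdiff, hinv, hbdd⟩
    refine ⟨fun c => mdifferentiable_cslash k (sec c) hdiff, ?_, fun c => hbdd (sec c)⟩
    intro γ
    funext τ c
    rw [vslash_indRep_apply]
    set c' := cosMul (Gamma0 N) c γ⁻¹ with hc'
    have hcc : cosMul (Gamma0 N) c' γ = c := by
      rw [hc', cosMul_cosMul, inv_mul_cancel, cosMul_one]
    have hg : indCoc (Gamma0 N) sec c' γ ∈ Gamma0 N := indCoc_mem hsec c' γ
    set g := indCoc (Gamma0 N) sec c' γ with hgdef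
    have hsecmul : sec c' * γ = g * sec c := by
      rw [hgdef, indCoc, hcc]
      group
    show denomZ γ τ ^ (-k) * (dirSL χ g⁻¹ * cslash k (sec c') f (γ • τ)) =
      cslash k (sec c) f τ
    have key : denomZ γ τ ^ (-k) * cslash k (sec c') f (γ • τ) =
        cslash k (sec c' * γ) f τ := by
      rw [cslash_mul]; rfl
    rw [mul_left_comm, key, hsecmul, cslash_mul]
    show dirSL χ g⁻¹ * (denomZ (sec c) τ ^ (-k) * cslash k g f (sec c • τ)) = _
    rw [mul_left_comm]
    have hfg := congrFun (hinv g hg) (sec c • τ)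
    rw [hfg]
    rfl
  · -- Part 2
    intro a f g
    funext τ c
    simp only [indForm, cslash]
    ring
  · -- Part 3
    rintro F ⟨hdiff, hinv, hbdd⟩
    rw [pairF_eCos]
    refine ⟨hdiff _, ?_, ?_⟩
    · intro g hg
      funext τ
      have h := congrFun (congrFun (hinv g) τ) (mkCos (Gamma0 N) 1)
      rw [vslash_indRep_apply] at h
      have hc' : cosMul (Gamma0 N) (mkCos (Gamma0 N) 1) g⁻¹ = mkCos (Gamma0 N) 1 := by
        rw [cosMul_mk, one_mul, mkCos_eq_iff]
        simpa using hg
      have hcm : cosMul (Gamma0 N) (mkCos (Gamma0 N) 1) g = mkCos (Gamma0 N) 1 := by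
        rw [cosMul_mk, one_mul, mkCos_eq_iff]
        simpa using inv_mem hg
      have hcoc : indCoc (Gamma0 N) sec (mkCos (Gamma0 N) 1) g = g := by
        rw [indCoc, hcm, hsec.2]
        group
      rw [hc', hcoc] at h
      show dirSL χ g⁻¹ * cslash k g (fun τ => F τ (mkCos (Gamma0 N) 1)) τ =
        F τ (mkCos (Gamma0 N) 1)
      rw [← h]
      show dirSL χ g⁻¹ * (denomZ g τ ^ (-k) * F (g • τ) (mkCos (Gamma0 N) 1)) = _
      ring
    · intro γ
      set c₀ := cosMul (Gamma0 N) (mkCos (Gamma0 N) 1) γ with hc₀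
      have hback : cosMul (Gamma0 N) c₀ γ⁻¹ = mkCos (Gamma0 N) 1 := by
        rw [hc₀, cosMul_cosMul, mul_inv_cancel, cosMul_one]
      have hg : indCoc (Gamma0 N) sec (mkCos (Gamma0 N) 1) γ ∈ Gamma0 N :=
        indCoc_mem hsec _ _
      set g := indCoc (Gamma0 N) sec (mkCos (Gamma0 N) 1) γ with hgdef
      have heq : cslash k γ (fun τ => F τ (mkCos (Gamma0 N) 1)) =
          fun τ => dirSL χ g * F τ c₀ := by
        funext τ
        have h := congrFun (congrFun (hinv γ) τ) c₀
        rw [vslash_indRep_apply, hback] at h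
        rw [← hgdef] at h
        have hmul := dirSL_inv_mul χ hg
        show denomZ γ τ ^ (-k) * F (γ • τ) (mkCos (Gamma0 N) 1) = dirSL χ g * F τ c₀
        rw [← h]
        linear_combination (-(denomZ γ τ ^ (-k) * F (γ • τ) (mkCos (Gamma0 N) 1))) * hmul
      rw [heq]
      exact Asymptotics.IsBigO.const_mul_left (hbdd c₀) _
  · -- Part 4
    intro f _
    rw [pairF_eCos]
    funext τ
    show cslash k (sec (mkCos (Gamma0 N) 1)) f τ = f τ
    rw [hsec.2, cslash_one]
  · -- Part 5
    rintro F ⟨hdiff, hinv, hbdd⟩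
    rw [pairF_eCos]
    funext τ c
    have h := congrFun (congrFun (hinv (sec c)) τ) c
    rw [vslash_indRep_apply] at h
    have hc' : cosMul (Gamma0 N) c (sec c)⁻¹ = mkCos (Gamma0 N) 1 := by
      calc cosMul (Gamma0 N) c (sec c)⁻¹
          = cosMul (Gamma0 N) (mkCos (Gamma0 N) (sec c)) (sec c)⁻¹ := by rw [hsec.1]
        _ = mkCos (Gamma0 N) 1 := by rw [cosMul_mk, mul_inv_cancel]
    have hcm : cosMul (Gamma0 N) (mkCos (Gamma0 N) 1) (sec c) = c := by
      rw [cosMul_mk, one_mul, hsec.1]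
    have hcoc : indCoc (Gamma0 N) sec (mkCos (Gamma0 N) 1) (sec c) = 1 := by
      rw [indCoc, hcm, hsec.2, one_mul, mul_inv_cancel]
    rw [hc', hcoc, inv_one, dirSL_one, one_mul] at h
    exact h
end
end

section
/- Let M be a positive integer and ρ a finite-dimensional complex representation of SL₂(ℤ). If ker ρ has finite index in SL₂(ℤ), then ker(T_M ρ) has finite index in SL₂(ℤ). Moreover, if Γ(N) ⊆ ker ρ for some positive integer N, then Γ(MN) ⊆ ker(T_M ρ); in particular, if ker ρ is a congruence subgroup then so is ker(T_M ρ). -/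
open scoped MatrixGroups Manifold Kronecker ComplexConjugate Classical ComplexOrder
open Matrix UpperHalfPlane Complex Filter MeasureTheory CongruenceSubgroup

noncomputable section

open VVMF

section HeckeKernelAux

variable {M : ℕ}

private lemma matrix_one_indep {n α : Type*} [Zero α] [One α] (i1 i2 : DecidableEq n) :
    (@One.one _ (@Matrix.one n α i1 _ _)) = (@One.one _ (@Matrix.one n α i2 _ _)) := by
  rw [Subsingleton.elim i1 i2]

private lemma delta_unique {M : ℕ} (g : SL(2, ℤ)) (m₁ m₂ : Delta M)
    (h : (g : GL2ℤ) * m₁.1 = m₂.1) : g = 1 ∧ m₁ = m₂ := by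
  have hc1 : m₁.1 1 0 = 0 := m₁.2.1
  have ha1 : 0 < m₁.1 0 0 := m₁.2.2.1
  have hb1 : 0 ≤ m₁.1 0 1 := m₁.2.2.2.2.1
  have hbd1 : m₁.1 0 1 < m₁.1 1 1 := m₁.2.2.2.2.2
  have hc2 : m₂.1 1 0 = 0 := m₂.2.1
  have ha2 : 0 < m₂.1 0 0 := m₂.2.2.1
  have hb2 : 0 ≤ m₂.1 0 1 := m₂.2.2.2.2.1
  have hbd2 : m₂.1 0 1 < m₂.1 1 1 := m₂.2.2.2.2.2
  have hdet : g 0 0 * g 1 1 - g 0 1 * g 1 0 = 1 := by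
    have := g.2; rwa [Matrix.det_fin_two] at this
  have e00 : g 0 0 * m₁.1 0 0 + g 0 1 * m₁.1 1 0 = m₂.1 0 0 := by
    have := congrFun (congrFun h 0) 0; simpa [Matrix.mul_apply, Fin.sum_univ_two] using this
  have e01 : g 0 0 * m₁.1 0 1 + g 0 1 * m₁.1 1 1 = m₂.1 0 1 := by
    have := congrFun (congrFun h 0) 1; simpa [Matrix.mul_apply, Fin.sum_univ_two] using this
  have e10 : g 1 0 * m₁.1 0 0 + g 1 1 * m₁.1 1 0 = m₂.1 1 0 := by
    have := congrFun (congrFun h 1) 0; simpa [Matrix.mul_apply, Fin.sum_univ_two] using this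
  have e11 : g 1 0 * m₁.1 0 1 + g 1 1 * m₁.1 1 1 = m₂.1 1 1 := by
    have := congrFun (congrFun h 1) 1; simpa [Matrix.mul_apply, Fin.sum_univ_two] using this
  rw [hc1, hc2] at e10
  rw [hc1] at e00
  have hg10 : g 1 0 = 0 := by
    have h0 : g 1 0 * m₁.1 0 0 = 0 := by linarith
    rcases mul_eq_zero.mp h0 with h' | h'
    · exact h'
    · omega
  rw [hg10] at hdet e11
  have hmul : g 0 0 * g 1 1 = 1 := by linarith
  have hg : g 0 0 = 1 ∧ g 1 1 = 1 := by
    rcases Int.mul_eq_one_iff_eq_one_or_neg_one.mp hmul with ⟨h1, h2⟩ | ⟨h1, h2⟩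
    · exact ⟨h1, h2⟩
    · rw [h1] at e00; nlinarith
  rw [hg.1] at e00 e01
  rw [hg.2] at e11
  have haa : m₁.1 0 0 = m₂.1 0 0 := by linarith
  have hdd : m₁.1 1 1 = m₂.1 1 1 := by linarith
  rw [hdd] at hbd1
  have hg01 : g 0 1 = 0 := by
    rcases lt_trichotomy (g 0 1) 0 with h' | h' | h'
    · nlinarith
    · exact h'
    · nlinarith
  rw [hg01] at e01
  have hbb : m₁.1 0 1 = m₂.1 0 1 := by linarith
  constructor
  · ext i j
    fin_cases i <;> fin_cases j <;>
      simp [hg.1, hg.2, hg01, hg10]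
  · apply Subtype.ext
    ext i j
    fin_cases i <;> fin_cases j
    · exact haa
    · exact hbb
    · show m₁.1 1 0 = m₂.1 1 0; rw [hc1, hc2]
    · exact hdd

private lemma decomp_unique {M : ℕ} (g₁ g₂ : SL(2, ℤ)) (m₁ m₂ : Delta M)
    (h : (g₁ : GL2ℤ) * m₁.1 = (g₂ : GL2ℤ) * m₂.1) : g₁ = g₂ ∧ m₁ = m₂ := by
  have key : ((g₂⁻¹ * g₁ : SL(2, ℤ)) : GL2ℤ) * m₁.1 = m₂.1 := by
    have h2 : ((g₂⁻¹ : SL(2, ℤ)) : GL2ℤ) * ((g₂ : GL2ℤ) * m₂.1) = m₂.1 := by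
      rw [← Matrix.mul_assoc, ← Matrix.SpecialLinearGroup.coe_mul, inv_mul_cancel]
      simp
    rw [Matrix.SpecialLinearGroup.coe_mul, Matrix.mul_assoc, h, h2]
  obtain ⟨hg, hm⟩ := delta_unique _ _ _ key
  refine ⟨?_, hm⟩
  have := congrArg (g₂ * ·) hg
  simpa [mul_assoc] using this


private lemma gamma_conj {M : ℕ} (N : ℕ) (γ : SL(2, ℤ))
    (hγ : γ ∈ CongruenceSubgroup.Gamma (M * N)) (m : Delta M) :
    ∃ h : SL(2, ℤ), h ∈ CongruenceSubgroup.Gamma N ∧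
      (h : GL2ℤ) * m.1 = m.1 * (γ : GL2ℤ) := by
  rw [CongruenceSubgroup.Gamma_mem] at hγ
  obtain ⟨hp0, hq0, hr0, hs0⟩ := hγ
  have hMN : ((M * N : ℕ) : ℤ) = (M : ℤ) * N := by push_cast; ring
  have hq : ((M * N : ℕ) : ℤ) ∣ (γ : GL2ℤ) 0 1 :=
    (ZMod.intCast_zmod_eq_zero_iff_dvd _ _).mp (by exact_mod_cast hq0)
  have hr : ((M * N : ℕ) : ℤ) ∣ (γ : GL2ℤ) 1 0 :=
    (ZMod.intCast_zmod_eq_zero_iff_dvd _ _).mp (by exact_mod_cast hr0)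
  have hp : ((M * N : ℕ) : ℤ) ∣ ((γ : GL2ℤ) 0 0 - 1) :=
    (ZMod.intCast_zmod_eq_zero_iff_dvd _ _).mp (by push_cast; rw [hp0]; ring)
  have hs : ((M * N : ℕ) : ℤ) ∣ ((γ : GL2ℤ) 1 1 - 1) :=
    (ZMod.intCast_zmod_eq_zero_iff_dvd _ _).mp (by push_cast; rw [hs0]; ring)
  obtain ⟨q₁, hq₁⟩ := hq
  obtain ⟨r₁, hr₁⟩ := hr
  obtain ⟨p₁, hp₁⟩ := hp
  obtain ⟨s₁, hs₁⟩ := hs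
  rw [hMN] at hp₁ hq₁ hr₁ hs₁
  have hc : m.1 1 0 = 0 := m.2.1
  have had : m.1 0 0 * m.1 1 1 = (M : ℤ) := m.2.2.2.1
  have hp2 : (γ : GL2ℤ) 0 0 = 1 + m.1 0 0 * m.1 1 1 * N * p₁ := by
    linear_combination hp₁ - (N : ℤ) * p₁ * had
  have hq2 : (γ : GL2ℤ) 0 1 = m.1 0 0 * m.1 1 1 * N * q₁ := by
    linear_combination hq₁ - (N : ℤ) * q₁ * had
  have hr2 : (γ : GL2ℤ) 1 0 = m.1 0 0 * m.1 1 1 * N * r₁ := by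
    linear_combination hr₁ - (N : ℤ) * r₁ * had
  have hs2 : (γ : GL2ℤ) 1 1 = 1 + m.1 0 0 * m.1 1 1 * N * s₁ := by
    linear_combination hs₁ - (N : ℤ) * s₁ * had
  have hdetγ : (γ : GL2ℤ) 0 0 * (γ : GL2ℤ) 1 1 - (γ : GL2ℤ) 0 1 * (γ : GL2ℤ) 1 0 = 1 := by
    have := γ.2; rwa [Matrix.det_fin_two] at this
  have hdeth : (!![(γ : GL2ℤ) 0 0 + (N : ℤ) * (m.1 0 1 * m.1 1 1 * r₁),
      (N : ℤ) * (m.1 0 0 * m.1 0 1 * (s₁ - p₁) + m.1 0 0 * m.1 0 0 * q₁ -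
        m.1 0 1 * m.1 0 1 * r₁);
      (N : ℤ) * (m.1 1 1 * m.1 1 1 * r₁),
      (γ : GL2ℤ) 1 1 - (N : ℤ) * (m.1 0 1 * m.1 1 1 * r₁)] : GL2ℤ).det = 1 := by
    rw [Matrix.det_fin_two_of]
    rw [hp2, hq2, hr2, hs2] at hdetγ
    rw [hp2, hs2]
    linear_combination hdetγ
  refine ⟨⟨_, hdeth⟩, ?_, ?_⟩
  · refine CongruenceSubgroup.Gamma_mem.mpr ?_
    refine ⟨?_, ?_, ?_, ?_⟩
    · show (((!![(γ : GL2ℤ) 0 0 + _, _; _, _] : GL2ℤ) 0 0 : ℤ) : ZMod N) = 1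
      simp only [Matrix.cons_val', Matrix.cons_val_zero, Matrix.cons_val_one, Matrix.head_cons, Matrix.head_fin_const, Matrix.empty_val', Matrix.cons_val_fin_one, Matrix.of_apply]
      rw [hp2]
      push_cast [ZMod.natCast_self]
      ring
    · show (((!![_, _; _, _] : GL2ℤ) 0 1 : ℤ) : ZMod N) = 0
      simp only [Matrix.cons_val', Matrix.cons_val_zero, Matrix.cons_val_one, Matrix.head_cons, Matrix.head_fin_const, Matrix.empty_val', Matrix.cons_val_fin_one, Matrix.of_apply]
      push_cast [ZMod.natCast_self]
      ring
    · show (((!![_, _; _, _] : GL2ℤ) 1 0 : ℤ) : ZMod N) = 0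
      simp only [Matrix.cons_val', Matrix.cons_val_zero, Matrix.cons_val_one, Matrix.head_cons, Matrix.head_fin_const, Matrix.empty_val', Matrix.cons_val_fin_one, Matrix.of_apply]
      push_cast [ZMod.natCast_self]
      ring
    · show (((!![_, _; _, _] : GL2ℤ) 1 1 : ℤ) : ZMod N) = 1
      simp only [Matrix.cons_val', Matrix.cons_val_zero, Matrix.cons_val_one, Matrix.head_cons, Matrix.head_fin_const, Matrix.empty_val', Matrix.cons_val_fin_one, Matrix.of_apply]
      rw [hs2]
      push_cast [ZMod.natCast_self]
      ring
  · show (!![_, _; _, _] : GL2ℤ) * m.1 = m.1 * (γ : GL2ℤ)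
    ext i j
    fin_cases i <;> fin_cases j
    · show ((!![_, _; _, _] : GL2ℤ) * m.1) 0 0 = (m.1 * (γ : GL2ℤ)) 0 0
      simp only [Matrix.mul_apply, Fin.sum_univ_two]
      simp only [Matrix.cons_val', Matrix.cons_val_zero, Matrix.cons_val_one,
        Matrix.head_cons, Matrix.empty_val', Matrix.cons_val_fin_one, Matrix.head_fin_const,
        Matrix.of_apply]
      rw [hc]
      linear_combination (-(m.1 0 1)) * hr2
    · show ((!![_, _; _, _] : GL2ℤ) * m.1) 0 1 = (m.1 * (γ : GL2ℤ)) 0 1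
      simp only [Matrix.mul_apply, Fin.sum_univ_two]
      simp only [Matrix.cons_val', Matrix.cons_val_zero, Matrix.cons_val_one,
        Matrix.head_cons, Matrix.empty_val', Matrix.cons_val_fin_one, Matrix.head_fin_const,
        Matrix.of_apply]
      linear_combination (m.1 0 1) * hp2 - (m.1 0 1) * hs2 - (m.1 0 0) * hq2
    · show ((!![_, _; _, _] : GL2ℤ) * m.1) 1 0 = (m.1 * (γ : GL2ℤ)) 1 0
      simp only [Matrix.mul_apply, Fin.sum_univ_two]
      simp only [Matrix.cons_val', Matrix.cons_val_zero, Matrix.cons_val_one,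
        Matrix.head_cons, Matrix.empty_val', Matrix.cons_val_fin_one, Matrix.head_fin_const,
        Matrix.of_apply]
      rw [hc]
      linear_combination (-(m.1 1 1)) * hr2
    · show ((!![_, _; _, _] : GL2ℤ) * m.1) 1 1 = (m.1 * (γ : GL2ℤ)) 1 1
      simp only [Matrix.mul_apply, Fin.sum_univ_two]
      simp only [Matrix.cons_val', Matrix.cons_val_zero, Matrix.cons_val_one,
        Matrix.head_cons, Matrix.empty_val', Matrix.cons_val_fin_one, Matrix.head_fin_const,
        Matrix.of_apply]
      rw [hc]
      ring



variable (bar : Delta M → SL(2, ℤ) → Delta M) (coc : Delta M → SL(2, ℤ) → SL(2, ℤ))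
variable (hd : HeckeData M bar coc)

include hd

private lemma bar_one (m : Delta M) : bar m 1 = m ∧ coc m 1 = 1 := by
  have h := hd m 1
  have h' : ((coc m 1 : SL(2, ℤ)) : GL2ℤ) * (bar m 1).1 = ((1 : SL(2, ℤ)) : GL2ℤ) * m.1 := by
    simpa using h
  obtain ⟨hg, hm⟩ := decomp_unique _ _ _ _ h'
  exact ⟨hm, hg⟩

private lemma bar_mul (m : Delta M) (γ δ : SL(2, ℤ)) :
    bar m (γ * δ) = bar (bar m γ) δ ∧ coc m (γ * δ) = coc m γ * coc (bar m γ) δ := by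
  have h1 := hd m (γ * δ)
  have h2 := hd m γ
  have h3 := hd (bar m γ) δ
  have key : ((coc m (γ * δ) : SL(2, ℤ)) : GL2ℤ) * (bar m (γ * δ)).1 =
      ((coc m γ * coc (bar m γ) δ : SL(2, ℤ)) : GL2ℤ) * (bar (bar m γ) δ).1 := by
    rw [h1, Matrix.SpecialLinearGroup.coe_mul γ δ, ← Matrix.mul_assoc, ← h2,
      Matrix.mul_assoc, ← h3, ← Matrix.mul_assoc, ← Matrix.SpecialLinearGroup.coe_mul]
  obtain ⟨hg, hm⟩ := decomp_unique _ _ _ _ key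
  exact ⟨hm, hg⟩

private lemma heckeRep_isRep {ι : Type*} [Fintype ι]
    (ρ : SL(2, ℤ) → Matrix ι ι ℂ) (hρ : IsRep ρ) :
    IsRep (heckeRep M ρ bar coc) := by
  constructor
  · ext p q
    show (if p.2 = bar q.2 1⁻¹ then ρ ((coc q.2 1⁻¹)⁻¹) p.1 q.1 else 0) = _
    rw [inv_one, (bar_one bar coc hd q.2).1, (bar_one bar coc hd q.2).2, inv_one, hρ.1]
    rw [Matrix.one_apply]
    by_cases h1 : p.2 = q.2 <;> by_cases h2 : p.1 = q.1 <;>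
      simp [Matrix.one_apply, Prod.ext_iff, h1, h2]
  · intro γ δ
    ext p q
    rw [Matrix.mul_apply, Fintype.sum_prod_type]
    show (if p.2 = bar q.2 (γ * δ)⁻¹ then ρ ((coc q.2 (γ * δ)⁻¹)⁻¹) p.1 q.1 else 0) = _
    have hbm := bar_mul bar coc hd q.2 δ⁻¹ γ⁻¹
    rw [_root_.mul_inv_rev, hbm.1, hbm.2, _root_.mul_inv_rev]
    have key : ∀ j : ι, ∑ n : Delta M,
        heckeRep M ρ bar coc γ p (j, n) * heckeRep M ρ bar coc δ (j, n) q =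
        (if p.2 = bar (bar q.2 δ⁻¹) γ⁻¹ then
          ρ ((coc (bar q.2 δ⁻¹) γ⁻¹)⁻¹) p.1 j * ρ ((coc q.2 δ⁻¹)⁻¹) j q.1 else 0) := by
      intro j
      rw [Finset.sum_eq_single (bar q.2 δ⁻¹)]
      · show (if p.2 = bar (bar q.2 δ⁻¹) γ⁻¹ then _ else 0) *
            (if bar q.2 δ⁻¹ = bar q.2 δ⁻¹ then _ else 0) = _
        by_cases hc : p.2 = bar (bar q.2 δ⁻¹) γ⁻¹ <;> simp [hc]
      · intro n _ hn
        show (if p.2 = bar n γ⁻¹ then _ else 0) * (if n = bar q.2 δ⁻¹ then _ else 0) = 0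
        simp [hn]
      · intro hmem
        exact absurd (Finset.mem_univ _) hmem
    rw [Finset.sum_congr rfl (fun j _ => key j)]
    by_cases hc : p.2 = bar (bar q.2 δ⁻¹) γ⁻¹
    · simp only [hc, if_true]
      rw [hρ.2, Matrix.mul_apply]
    · simp [hc]


end HeckeKernelAux

/-- If `ker ρ` has finite index in `SL₂(ℤ)`, then so does `ker (T_M ρ)`;
and if `Γ(N) ⊆ ker ρ`, then `Γ(MN) ⊆ ker (T_M ρ)`. In particular the kernel of `T_M ρ`
is a congruence subgroup whenever the kernel of `ρ` is. -/
theorem heckeRep_kernel {ι : Type*} [Fintype ι] (M : ℕ) (hM : 0 < M)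
    (ρ : SL(2, ℤ) → Matrix ι ι ℂ) (hρ : IsRep ρ)
    (bar : Delta M → SL(2, ℤ) → Delta M) (coc : Delta M → SL(2, ℤ) → SL(2, ℤ))
    (hd : HeckeData M bar coc) :
    ((repKer ρ hρ).FiniteIndex →
      ∃ H : Subgroup SL(2, ℤ),
        (H : Set SL(2, ℤ)) = {γ | heckeRep M ρ bar coc γ = 1} ∧ H.FiniteIndex) ∧
    (∀ N : ℕ, 0 < N → (∀ γ ∈ CongruenceSubgroup.Gamma N, ρ γ = 1) →
      ∀ γ ∈ CongruenceSubgroup.Gamma (M * N), heckeRep M ρ bar coc γ = 1) := by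
  have hT : IsRep (heckeRep M ρ bar coc) := heckeRep_isRep bar coc hd ρ hρ
  constructor
  · intro hFI
    haveI := hFI
    refine ⟨repKer (heckeRep M ρ bar coc) hT, Set.ext fun γ =>
      ⟨fun h => h.trans (matrix_one_indep _ _), fun h => h.trans (matrix_one_indep _ _)⟩, ?_⟩
    set N₀ := repKer ρ hρ with hN₀
    let K : Subgroup SL(2, ℤ) :=
      { carrier := {γ | ∀ m : Delta M, bar m γ = m ∧ coc m γ ∈ N₀}
        one_mem' := fun m => ⟨(bar_one bar coc hd m).1, by
          rw [(bar_one bar coc hd m).2]; exact N₀.one_mem⟩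
        mul_mem' := by
          intro x y hx hy m
          refine ⟨?_, ?_⟩
          · rw [(bar_mul bar coc hd m x y).1, (hx m).1, (hy m).1]
          · rw [(bar_mul bar coc hd m x y).2, (hx m).1]
            exact N₀.mul_mem (hx m).2 (hy m).2
        inv_mem' := by
          intro x hx m
          have hb : bar (bar m x⁻¹) x = m := by
            rw [← (bar_mul bar coc hd m x⁻¹ x).1, inv_mul_cancel, (bar_one bar coc hd m).1]
          have hbm : bar m x⁻¹ = m := by
            conv_rhs => rw [← hb]
            rw [(hx (bar m x⁻¹)).1]
          have hcoc : coc m x⁻¹ * coc (bar m x⁻¹) x = 1 := by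
            rw [← (bar_mul bar coc hd m x⁻¹ x).2, inv_mul_cancel, (bar_one bar coc hd m).2]
          have : coc m x⁻¹ = (coc (bar m x⁻¹) x)⁻¹ := eq_inv_of_mul_eq_one_left hcoc
          refine ⟨hbm, ?_⟩
          rw [this, hbm]
          exact N₀.inv_mem (hx m).2 }
    have hKmem : ∀ γ : SL(2, ℤ), γ ∈ K ↔ ∀ m : Delta M, bar m γ = m ∧ coc m γ ∈ N₀ :=
      fun γ => Iff.rfl
    -- K has finite index
    let φ : SL(2, ℤ) → (Delta M → Delta M × (SL(2, ℤ) ⧸ N₀)) :=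
      fun γ m => (bar m γ, QuotientGroup.mk (coc m γ))
    have hconst : ∀ x y : SL(2, ℤ), (QuotientGroup.leftRel K) x y → φ x = φ y := by
      intro x y hxy
      rw [QuotientGroup.leftRel_apply] at hxy
      have hy : y = x * (x⁻¹ * y) := by group
      funext m
      have h1 := (bar_mul bar coc hd m x (x⁻¹ * y)).1
      have h2 := (bar_mul bar coc hd m x (x⁻¹ * y)).2
      have key : φ (x * (x⁻¹ * y)) m = φ x m := by
        show (bar m (x * (x⁻¹ * y)),
          (QuotientGroup.mk (coc m (x * (x⁻¹ * y))) : SL(2, ℤ) ⧸ N₀)) =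
          (bar m x, QuotientGroup.mk (coc m x))
        rw [h1, h2, (hxy (bar m x)).1]
        refine Prod.ext rfl ?_
        show QuotientGroup.mk (coc m x * coc (bar m x) (x⁻¹ * y)) = QuotientGroup.mk (coc m x)
        rw [QuotientGroup.eq]
        have hmem := N₀.inv_mem (hxy (bar m x)).2
        group
        simpa using hmem
      conv_rhs => rw [hy]
      exact key.symm
    let F : (SL(2, ℤ) ⧸ K) → (Delta M → Delta M × (SL(2, ℤ) ⧸ N₀)) :=
      fun c => Quotient.liftOn' c φ hconst
    have hinj : Function.Injective F := by
      intro c₁ c₂ h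
      induction c₁ using QuotientGroup.induction_on with
      | H a =>
      induction c₂ using QuotientGroup.induction_on with
      | H b =>
      have hab : φ a = φ b := h
      rw [QuotientGroup.eq]
      intro m
      have hb : bar (bar m a⁻¹) a = m := by
        rw [← (bar_mul bar coc hd m a⁻¹ a).1, inv_mul_cancel, (bar_one bar coc hd m).1]
      have hcoc : coc m a⁻¹ * coc (bar m a⁻¹) a = 1 := by
        rw [← (bar_mul bar coc hd m a⁻¹ a).2, inv_mul_cancel, (bar_one bar coc hd m).2]
      have hcoc' : coc m a⁻¹ = (coc (bar m a⁻¹) a)⁻¹ := eq_inv_of_mul_eq_one_left hcoc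
      have heq := congrFun hab (bar m a⁻¹)
      have heq1 : bar (bar m a⁻¹) a = bar (bar m a⁻¹) b := congrArg Prod.fst heq
      have heq2 : (QuotientGroup.mk (coc (bar m a⁻¹) a) : SL(2, ℤ) ⧸ N₀) =
          QuotientGroup.mk (coc (bar m a⁻¹) b) := congrArg Prod.snd heq
      constructor
      · rw [(bar_mul bar coc hd m a⁻¹ b).1, ← heq1, hb]
      · rw [(bar_mul bar coc hd m a⁻¹ b).2, hcoc']
        exact QuotientGroup.eq.mp heq2
    haveI : Finite (SL(2, ℤ) ⧸ K) := Finite.of_injective F hinj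
    haveI : K.FiniteIndex := Subgroup.finiteIndex_of_finite_quotient (H := K)
    refine Subgroup.finiteIndex_of_le (H := K) ?_
    intro γ hγ
    have h' : ∀ m : Delta M, bar m γ⁻¹ = m ∧ coc m γ⁻¹ ∈ N₀ := (hKmem γ⁻¹).mp (K.inv_mem hγ)
    suffices hsuff : heckeRep M ρ bar coc γ = 1 by
      exact hsuff.trans (matrix_one_indep _ _)
    ext p q
    show (if p.2 = bar q.2 γ⁻¹ then ρ ((coc q.2 γ⁻¹)⁻¹) p.1 q.1 else 0) = _
    rw [(h' q.2).1]
    have hone : ρ ((coc q.2 γ⁻¹)⁻¹) = 1 := N₀.inv_mem (h' q.2).2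
    rw [hone]
    by_cases h1 : p.2 = q.2 <;> by_cases h2 : p.1 = q.1 <;>
      simp [Matrix.one_apply, Prod.ext_iff, h1, h2]
  · intro N hN hΓ γ hγ
    have hγi : γ⁻¹ ∈ CongruenceSubgroup.Gamma (M * N) :=
      (CongruenceSubgroup.Gamma (M * N)).inv_mem hγ
    ext p q
    show (if p.2 = bar q.2 γ⁻¹ then ρ ((coc q.2 γ⁻¹)⁻¹) p.1 q.1 else 0) = _
    obtain ⟨h, hmem, hprod⟩ := gamma_conj N γ⁻¹ hγi q.2
    have hkey : ((coc q.2 γ⁻¹ : SL(2, ℤ)) : GL2ℤ) * (bar q.2 γ⁻¹).1 =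
        (h : GL2ℤ) * q.2.1 := by rw [hd q.2 γ⁻¹, hprod]
    obtain ⟨hcoc, hbar⟩ := decomp_unique _ _ _ _ hkey
    rw [hbar, hcoc]
    have hone : ρ h⁻¹ = 1 :=
      hΓ h⁻¹ ((CongruenceSubgroup.Gamma N).inv_mem hmem)
    rw [hone]
    by_cases h1 : p.2 = q.2 <;> by_cases h2 : p.1 = q.1 <;>
      simp [Matrix.one_apply, Prod.ext_iff, h1, h2]
end
end

section
/- Let M be a positive integer and ρ, σ finite-dimensional complex SL₂(ℤ)-representations. (i) For every homomorphism φ : ρ → σ of SL₂(ℤ)-representations, the map T_M φ : T_M ρ → T_M σ, v ⊗ 𝔢_m ↦ φ(v) ⊗ 𝔢_m, is a homomorphism of SL₂(ℤ)-representations, and for a further homomorphism ψ : σ → ϖ one has T_M(ψ∘φ) = (T_M ψ)∘(T_M φ). (ii) The map 𝟙 → T_M 𝟙, c ↦ c·Σ_{m∈Δ_M} 𝔢_m, is an injective homomorphism of SL₂(ℤ)-representations. (iii) The map (T_M ρ) ⊗ (T_M σ) → T_M(ρ ⊗ σ) sending (v ⊗ 𝔢_m) ⊗ (w ⊗ 𝔢_{m′})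 to (v ⊗ w) ⊗ 𝔢_m if m = m′ and to 0 otherwise is a surjective homomorphism of SL₂(ℤ)-representations. -/
open scoped MatrixGroups Manifold Kronecker ComplexConjugate Classical ComplexOrder
open Matrix UpperHalfPlane Complex Filter MeasureTheory CongruenceSubgroup

noncomputable section

open VVMF

namespace VVMF

lemma delta_eq_of_sl_mul {M : ℕ} (g : SL(2, ℤ)) (m m' : Delta M)
    (h : (g : GL2ℤ) * m'.1 = m.1) : m = m' := by
  obtain ⟨m, hc, ha, hdet, hb0, hbd⟩ := m
  obtain ⟨m', hc', ha', hdet', hb0', hbd'⟩ := m'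
  simp only at h
  have hdg : (g : GL2ℤ) 0 0 * (g : GL2ℤ) 1 1 - (g : GL2ℤ) 0 1 * (g : GL2ℤ) 1 0 = 1 := by
    have := g.2
    rw [Matrix.det_fin_two] at this
    linarith
  have e00 : (g : GL2ℤ) 0 0 * m' 0 0 = m 0 0 := by
    have := congrFun (congrFun h 0) 0
    simp only [Matrix.mul_apply, Fin.sum_univ_two, hc'] at this
    linarith
  have e10 : (g : GL2ℤ) 1 0 * m' 0 0 = 0 := by
    have := congrFun (congrFun h 1) 0
    simp only [Matrix.mul_apply, Fin.sum_univ_two, hc'] at this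
    rw [hc] at this; linarith
  have e01 : (g : GL2ℤ) 0 0 * m' 0 1 + (g : GL2ℤ) 0 1 * m' 1 1 = m 0 1 := by
    have := congrFun (congrFun h 0) 1
    simpa [Matrix.mul_apply, Fin.sum_univ_two] using this
  have e11 : (g : GL2ℤ) 1 0 * m' 0 1 + (g : GL2ℤ) 1 1 * m' 1 1 = m 1 1 := by
    have := congrFun (congrFun h 1) 1
    simpa [Matrix.mul_apply, Fin.sum_univ_two] using this
  have hr : (g : GL2ℤ) 1 0 = 0 := by
    rcases mul_eq_zero.mp e10 with h0 | h0
    · exact h0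
    · omega
  have hmul : (g : GL2ℤ) 0 0 * (g : GL2ℤ) 1 1 = 1 := by
    rw [hr, mul_zero, sub_zero] at hdg; exact hdg
  have hg00pos : 0 < (g : GL2ℤ) 0 0 := by
    have hpos : 0 < (g : GL2ℤ) 0 0 * m' 0 0 := e00 ▸ ha
    rcases mul_pos_iff.mp hpos with ⟨h1, _⟩ | ⟨_, h2⟩
    · exact h1
    · linarith
  have hg : (g : GL2ℤ) 0 0 = 1 ∧ (g : GL2ℤ) 1 1 = 1 := by
    rcases Int.mul_eq_one_iff_eq_one_or_neg_one.mp hmul with ⟨h1, h2⟩ | ⟨h1, h2⟩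
    · exact ⟨h1, h2⟩
    · omega
  obtain ⟨hg00, hg11⟩ := hg
  have hd : m 1 1 = m' 1 1 := by rw [← e11, hr, hg11]; ring
  have hd'pos : 0 < m' 1 1 := by omega
  have hle : (g : GL2ℤ) 0 1 ≤ 0 := by nlinarith
  have hge : 0 ≤ (g : GL2ℤ) 0 1 := by nlinarith
  have hq : (g : GL2ℤ) 0 1 = 0 := by omega
  have hb : m 0 1 = m' 0 1 := by rw [← e01, hg00, hq]; ring
  have ha'' : m 0 0 = m' 0 0 := by rw [← e00, hg00]; ring
  apply Subtype.ext
  show m = m'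
  ext i j
  fin_cases i <;> fin_cases j
  · exact ha''
  · exact hb
  · show m 1 0 = m' 1 0
    rw [hc, hc']
  · exact hd

lemma bar_inj {M : ℕ} {bar : Delta M → SL(2, ℤ) → Delta M}
    {coc : Delta M → SL(2, ℤ) → SL(2, ℤ)} (hd : HeckeData M bar coc) (δ : SL(2, ℤ)) :
    Function.Injective (fun m : Delta M => bar m δ) := by
  intro m m' h
  simp only at h
  have h1 := hd m δ
  have h2 := hd m' δ
  rw [← h] at h2
  apply delta_eq_of_sl_mul (coc m δ * (coc m' δ)⁻¹) m m'
  have hδ : ∀ A B : GL2ℤ, A * (δ : GL2ℤ) = B * (δ : GL2ℤ) → A = B := by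
    have h1 : (δ : GL2ℤ) * ((δ⁻¹ : SL(2, ℤ)) : GL2ℤ) = 1 := by
      rw [← Matrix.SpecialLinearGroup.coe_mul, mul_inv_cancel,
        Matrix.SpecialLinearGroup.coe_one]
    intro A B hAB
    calc A = A * ((δ : GL2ℤ) * ((δ⁻¹ : SL(2, ℤ)) : GL2ℤ)) := by rw [h1, mul_one]
      _ = A * (δ : GL2ℤ) * ((δ⁻¹ : SL(2, ℤ)) : GL2ℤ) := by rw [mul_assoc]
      _ = B * (δ : GL2ℤ) * ((δ⁻¹ : SL(2, ℤ)) : GL2ℤ) := by rw [hAB]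
      _ = B := by rw [mul_assoc, h1, mul_one]
  apply hδ
  calc ((coc m δ * (coc m' δ)⁻¹ : SL(2, ℤ)) : GL2ℤ) * m'.1 * (δ : GL2ℤ)
      = ((coc m δ : SL(2, ℤ)) : GL2ℤ) * (((coc m' δ)⁻¹ : SL(2, ℤ)) : GL2ℤ) *
        (m'.1 * (δ : GL2ℤ)) := by
        rw [Matrix.SpecialLinearGroup.coe_mul, mul_assoc]
    _ = ((coc m δ : SL(2, ℤ)) : GL2ℤ) * ((((coc m' δ)⁻¹ : SL(2, ℤ)) : GL2ℤ) *
        (((coc m' δ) : SL(2, ℤ)) : GL2ℤ)) * (bar m δ).1 := by rw [← h2]; simp only [mul_assoc]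
    _ = ((coc m δ : SL(2, ℤ)) : GL2ℤ) * (bar m δ).1 := by
        rw [← Matrix.SpecialLinearGroup.coe_mul, inv_mul_cancel,
          Matrix.SpecialLinearGroup.coe_one, mul_one]
    _ = m.1 * (δ : GL2ℤ) := h1

end VVMF

/-- (i) `T_M φ` is a homomorphism of `SL₂(ℤ)`-representations
`T_M ρ → T_M σ` for every homomorphism `φ : ρ → σ`, functorially in `φ`;
(ii) `𝟙 → T_M 𝟙`, `c ↦ c ∑_m 𝔢_m`, is an injective homomorphism;
(iii) `(T_M ρ) ⊗ (T_M σ) → T_M (ρ ⊗ σ)` is a surjective homomorphism. -/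
theorem hecke_operator_on_representations {ι κ ν : Type*} [Fintype ι] [Fintype κ] [Fintype ν]
    (M : ℕ) (hM : 0 < M)
    (ρ : SL(2, ℤ) → Matrix ι ι ℂ) (σ : SL(2, ℤ) → Matrix κ κ ℂ)
    (ϖ : SL(2, ℤ) → Matrix ν ν ℂ)
    (hρ : IsRep ρ) (hσ : IsRep σ) (hϖ : IsRep ϖ)
    (bar : Delta M → SL(2, ℤ) → Delta M) (coc : Delta M → SL(2, ℤ) → SL(2, ℤ))
    (hd : HeckeData M bar coc) :
    -- (i) `T_M φ` intertwines `T_M ρ` and `T_M σ`, and `T_M (ψ ∘ φ) = (T_M ψ) ∘ (T_M φ)`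
    (∀ φ : Matrix κ ι ℂ, (∀ γ, φ * ρ γ = σ γ * φ) →
      ∀ γ, heckeHom M φ * heckeRep M ρ bar coc γ = heckeRep M σ bar coc γ * heckeHom M φ) ∧
    (∀ (φ : Matrix κ ι ℂ) (ψ : Matrix ν κ ℂ),
      heckeHom M (ψ * φ) = heckeHom M ψ * heckeHom M φ) ∧
    -- (ii) `𝟙 ↪ T_M 𝟙`
    (Function.Injective (fun v : Unit → ℂ => (oneIncl M).mulVec v) ∧
      ∀ γ : SL(2, ℤ),
        heckeRep M oneRep bar coc γ * oneIncl M = oneIncl M * oneRep γ) ∧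
    -- (iii) `(T_M ρ) ⊗ (T_M σ) ↠ T_M (ρ ⊗ σ)`
    (Function.Surjective
      (fun x : (ι × Delta M) × (κ × Delta M) → ℂ => (heckeTenProj ι κ M).mulVec x) ∧
      ∀ γ : SL(2, ℤ),
        heckeTenProj ι κ M * (heckeRep M ρ bar coc γ ⊗ₖ heckeRep M σ bar coc γ) =
          heckeRep M (fun γ => ρ γ ⊗ₖ σ γ) bar coc γ * heckeTenProj ι κ M) := by
  refine ⟨?_, ?_, ⟨?_, ?_⟩, ⟨?_, ?_⟩⟩
  · -- (i) intertwining
    intro φ hφ γ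
    ext p q
    have key := congrFun (congrFun (hφ ((coc q.2 γ⁻¹)⁻¹)) p.1) q.1
    simp only [Matrix.mul_apply, Fintype.sum_prod_type, heckeHom, heckeRep, ite_mul, mul_ite,
      zero_mul, mul_zero, Finset.sum_ite_eq, Finset.sum_ite_eq', Finset.mem_univ, if_true] at key ⊢
    by_cases h : p.2 = bar q.2 γ⁻¹ <;> simp [h, key]
  · -- (i) functoriality
    intro φ ψ
    ext p q
    simp only [Matrix.mul_apply, Fintype.sum_prod_type, heckeHom, ite_mul, mul_ite,
      zero_mul, mul_zero, Finset.sum_ite_eq, Finset.sum_ite_eq', Finset.mem_univ, if_true]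
    by_cases h : p.2 = q.2 <;> simp [h]
  · -- (ii) injectivity
    intro v w h
    have h1 := congrFun h ((), mMat M hM)
    simp only [Matrix.mulVec, dotProduct, oneIncl, Matrix.of_apply, one_mul,
      Finset.univ_unique, Finset.sum_singleton] at h1
    funext u
    cases u
    exact h1
  · -- (ii) intertwining
    intro γ
    ext p u
    have key : ∀ n₀ : Delta M,
        (∑ n : Delta M, (if n₀ = bar n γ⁻¹ then (1 : ℂ) else 0)) = 1 := by
      intro n₀
      obtain ⟨m₀, hm₀⟩ :=
        (Finite.injective_iff_bijective.mp (bar_inj hd γ⁻¹)).surjective n₀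
      rw [Finset.sum_eq_single m₀]
      · simp only at hm₀; rw [if_pos hm₀.symm]
      · intro b _ hb
        rw [if_neg]
        intro hc
        exact hb (bar_inj hd γ⁻¹ ((show bar b γ⁻¹ = bar m₀ γ⁻¹ from hc.symm.trans hm₀.symm)))
      · simp
    simp only [Matrix.mul_apply, Fintype.sum_prod_type, heckeRep, oneRep, oneIncl,
      Matrix.of_apply, Matrix.one_apply, mul_one, Finset.univ_unique, Finset.sum_singleton]
    simpa using key p.2
  · -- (iii) surjectivity
    intro y
    refine ⟨fun q => if q.1.2 = q.2.2 then y ((q.1.1, q.2.1), q.1.2) else 0, ?_⟩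
    funext p
    simp only [Matrix.mulVec, dotProduct, heckeTenProj]
    rw [Finset.sum_eq_single ((p.1.1, p.2), (p.1.2, p.2))]
    · simp
    · rintro ⟨⟨a, b⟩, ⟨c, d⟩⟩ _ hq
      rw [if_neg, zero_mul]
      rintro ⟨h1, h2, h3, h4⟩
      exact hq (by simp_all [Prod.ext_iff])
    · simp
  · -- (iii) intertwining
    intro γ
    ext p q
    rw [Matrix.mul_apply, Matrix.mul_apply]
    have hL : (∑ r : (ι × Delta M) × (κ × Delta M),
        heckeTenProj ι κ M p r *
          (heckeRep M ρ bar coc γ ⊗ₖ heckeRep M σ bar coc γ) r q) =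
        (heckeRep M ρ bar coc γ ⊗ₖ heckeRep M σ bar coc γ) ((p.1.1, p.2), (p.1.2, p.2)) q := by
      rw [Finset.sum_eq_single ((p.1.1, p.2), (p.1.2, p.2))]
      · simp [heckeTenProj]
      · rintro ⟨⟨a, b⟩, ⟨c, d⟩⟩ _ hq'
        simp only [heckeTenProj]
        rw [if_neg, zero_mul]
        rintro ⟨h1, h2, h3, h4⟩
        exact hq' (by simp_all [Prod.ext_iff])
      · simp
    have hR : (∑ r : (ι × κ) × Delta M,
        heckeRep M (fun γ => ρ γ ⊗ₖ σ γ) bar coc γ p r * heckeTenProj ι κ M r q) =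
        (if q.1.2 = q.2.2 then
          heckeRep M (fun γ => ρ γ ⊗ₖ σ γ) bar coc γ p ((q.1.1, q.2.1), q.1.2) else 0) := by
      rw [Finset.sum_eq_single ((q.1.1, q.2.1), q.1.2)]
      · by_cases h : q.1.2 = q.2.2
        · rw [if_pos h]
          simp [heckeTenProj, h]
        · rw [if_neg h]
          have : heckeTenProj ι κ M ((q.1.1, q.2.1), q.1.2) q = 0 := by
            simp only [heckeTenProj]
            rw [if_neg]
            rintro ⟨_, _, _, h4⟩
            exact h h4
          rw [this, mul_zero]
      · rintro ⟨⟨a, b⟩, c⟩ _ hq'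
        have : heckeTenProj ι κ M ((a, b), c) q = 0 := by
          simp only [heckeTenProj]
          rw [if_neg]
          rintro ⟨h1, h2, h3, h4⟩
          exact hq' (by simp_all [Prod.ext_iff])
        rw [this, mul_zero]
      · simp
    rw [hL, hR]
    simp only [Matrix.kroneckerMap_apply, heckeRep]
    by_cases h : q.1.2 = q.2.2
    · rw [if_pos h, ← h]
      by_cases hp : p.2 = bar q.1.2 γ⁻¹ <;> simp [hp]
    · rw [if_neg h]
      by_cases hp1 : p.2 = bar q.1.2 γ⁻¹
      · have hp2 : p.2 ≠ bar q.2.2 γ⁻¹ := by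
          intro hc
          exact h (bar_inj hd γ⁻¹ (hp1.symm.trans hc))
        rw [if_neg hp2, mul_zero]
      · rw [if_neg hp1, zero_mul]
end
end
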